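/- Let D_K be a K-IC structure, and for each inner vertex i let T_i be a directed rooted tree in D_K with root i whose leaves are exactly the other inner vertices and whose internal non-root vertices are non-inner. If v is a non-inner vertex lying in both T_i and T_j (i ≠ j inner), then neither i nor j is a leaf descendant of v in the other tree; that is, the set of leaves of T_i below v is contained in V_I \ {i, j}. -/

import Mathlib

open Finset
open scoped Classical

universe u

variable {V : Type u}

/-- `l` is a directed cycle: nonempty, distinct vertices, consecutive arcs, wrap-around arc. -/
def IsCycle (A : V → V → Prop) (l : List V) : Prop :=
  l ≠ [] ∧ l.Nodup ∧ l.Chain' A ∧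
    ∀ a b, l.getLast? = some a → l.head? = some b → A a b

/-- `l` is a directed path from `i` to `j`. -/
def IsPath (A : V → V → Prop) (l : List V) (i j : V) : Prop :=
  l.Nodup ∧ l.Chain' A ∧ l.head? = some i ∧ l.getLast? = some j

/-- An I-path w.r.t. inner vertex set `VI`: a path between two distinct inner vertices
whose interior vertices are all non-inner. -/
def IsIPath [DecidableEq V] (A : V → V → Prop) (VI : Finset V) (l : List V) (i j : V) : Prop :=
  IsPath A l i j ∧ i ∈ VI ∧ j ∈ VI ∧ i ≠ j ∧ ∀ v ∈ l.dropLast.drop 1, v ∉ VI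

/-- An I-cycle: a directed cycle containing exactly one inner vertex. -/
def IsICycle [DecidableEq V] (A : V → V → Prop) (VI : Finset V) (l : List V) : Prop :=
  IsCycle A l ∧ (l.toFinset ∩ VI).card = 1

/-- A K-IC structure: exactly one I-path between each ordered pair of distinct inner
vertices, and no I-cycle. -/
def IsKIC [DecidableEq V] (A : V → V → Prop) (VI : Finset V) : Prop :=
  (∀ i ∈ VI, ∀ j ∈ VI, i ≠ j → ∃! l : List V, IsIPath A VI l i j) ∧
  ∀ l : List V, ¬ IsICycle A VI l

/-- Out-degree of a vertex. -/
noncomputable def outDeg [Fintype V] (A : V → V → Prop) (v : V) : ℕ :=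
  (univ.filter fun w => A v w).card

/-- Minimum out-degree of a digraph. -/
noncomputable def minOutDeg [Fintype V] [Nonempty V] (A : V → V → Prop) : ℕ :=
  univ.inf' univ_nonempty (outDeg A)

/-- Out-degree of `v` within the subdigraph induced on `s`. -/
noncomputable def outDegOn (A : V → V → Prop) (s : Finset V) (v : V) : ℕ :=
  (s.filter fun w => A v w).card

/-- Minimum out-degree of the subdigraph induced on `s` (0 if `s` is empty). -/
noncomputable def minOutDegOn (A : V → V → Prop) (s : Finset V) : ℕ :=
  if h : s.Nonempty then s.inf' h (outDegOn A s) else 0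

/-- Induced arc relation on a vertex subset. -/
def inducedRel (A : V → V → Prop) (s : Finset V) : V → V → Prop :=
  fun u v => u ∈ s ∧ v ∈ s ∧ A u v

/-- A valid index code of length `p` for `t`-bit messages: the messages of every receiver
are determined by the codeword together with its side information (its out-neighbours'
messages). -/
def IsIndexCode [Fintype V] (A : V → V → Prop) (t p : ℕ)
    (F : (V → (Fin t → ZMod 2)) → (Fin p → ZMod 2)) : Prop :=
  ∀ x y : V → (Fin t → ZMod 2), F x = F y →
    ∀ i : V, (∀ q, A i q → x q = y q) → x i = y i

/-- No directed cycle lies entirely inside `s`. -/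
def AcyclicOn (A : V → V → Prop) (s : Finset V) : Prop :=
  ∀ l : List V, IsCycle A l → ¬ (∀ v ∈ l, v ∈ s)

/-- `s` (as a partial clique) is minimal: its savings `δ⁺` strictly exceed the total
savings of any partition of `s` into at least two parts. -/
def IsMinimalPC [DecidableEq V] (A : V → V → Prop) (s : Finset V) : Prop :=
  ∀ P : Finpartition s, 2 ≤ P.parts.card →
    ∑ p ∈ P.parts, minOutDegOn A p < minOutDegOn A s

/-- A directed rooted tree inside the digraph `A`, rooted at inner vertex `i`, whose
leaves are exactly the other inner vertices and whose internal vertices are non-inner. -/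
structure IsICTree [DecidableEq V] (A : V → V → Prop) (VI : Finset V) (i : V)
    (T : V → V → Prop) : Prop where
  sub : ∀ u v, T u v → A u v
  root_mem : i ∈ VI
  root_no_parent : ∀ u, ¬ T u i
  unique_parent : ∀ u u' v, T u v → T u' v → u = u'
  reach : ∀ j ∈ VI, j ≠ i → Relation.ReflTransGen T i j
  leaf : ∀ j ∈ VI, j ≠ i → ∀ w, ¬ T j w
  connected : ∀ u v, T u v → Relation.ReflTransGen T i u
  acyclic : ∀ v, ¬ Relation.TransGen T v v

/-- The Class-A digraph on `3*m` vertices (`K = 2*m` inner vertices `0,…,K-1`,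
outer vertices `K,…,3m-1`): outer vertex `K+i` has arcs to inner `2i` and `2i+1`;
inner `2i` and `2i+1` have mutual arcs and arcs to every outer vertex except `K+i`. -/
def classARel (m : ℕ) : Fin (3 * m) → Fin (3 * m) → Prop := fun u v =>
  (2 * m ≤ u.val ∧ v.val < 2 * m ∧ v.val / 2 = u.val - 2 * m) ∨
  (u.val < 2 * m ∧ v.val < 2 * m ∧ u.val / 2 = v.val / 2 ∧ u ≠ v) ∨
  (u.val < 2 * m ∧ 2 * m ≤ v.val ∧ v.val - 2 * m ≠ u.val / 2)

/-- From reflexive-transitive reachability, extract a walk list with endpoint and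
arc-availability properties. -/
lemma walk_of_rtg {R : V → V → Prop} {a b : V} (h : Relation.ReflTransGen R a b) :
    ∃ l : List V, l ≠ [] ∧ l.Chain' R ∧ l.head? = some a ∧ l.getLast? = some b ∧
      (∀ x ∈ l, x = b ∨ ∃ y, R x y) ∧ (∀ x ∈ l, x = a ∨ ∃ u, R u x) := by
  induction h using Relation.ReflTransGen.head_induction_on with
  | refl => exact ⟨[b], by simp; exact List.isChain_singleton b⟩
  | head hac _ ih =>
    rename_i a c hcb
    obtain ⟨l, hne, hch, hhd, hlast, hout, hin⟩ := ih
    refine ⟨a :: l, by simp, ?_, rfl, ?_, ?_, ?_⟩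
    · exact List.isChain_cons.mpr ⟨fun y hy => by rw [hhd] at hy; cases hy; exact hac, hch⟩
    · cases l with
      | nil => exact absurd rfl hne
      | cons z s => rw [List.getLast?_cons_cons]; exact hlast
    · intro x hx
      rcases List.mem_cons.mp hx with rfl | hx'
      · exact Or.inr ⟨c, hac⟩
      · exact hout x hx'
    · intro x hx
      rcases List.mem_cons.mp hx with rfl | hx'
      · exact Or.inl rfl
      · rcases hin x hx' with rfl | h'
        · exact Or.inr ⟨a, hac⟩
        · exact Or.inr h'

lemma not_nodup_decomp : ∀ {l : List V}, ¬ l.Nodup →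
    ∃ (x : V) (a b c : List V), l = a ++ x :: b ++ x :: c := by
  intro l
  induction l with
  | nil => intro h; exact absurd List.nodup_nil h
  | cons y t ih =>
    intro h
    by_cases hy : y ∈ t
    · obtain ⟨b, c, rfl⟩ := List.append_of_mem hy
      exact ⟨y, [], b, c, rfl⟩
    · have : ¬ t.Nodup := fun hn => h (List.nodup_cons.mpr ⟨hy, hn⟩)
      obtain ⟨x, a, b, c, rfl⟩ := ih this
      exact ⟨x, y :: a, b, c, rfl⟩

/-- A closed walk through an inner vertex `j`, all of whose other vertices are
non-inner, yields an I-cycle. -/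
lemma icycle_of_closed_walk [DecidableEq V] (A : V → V → Prop) (VI : Finset V) (j : V)
    (hj : j ∈ VI) : ∀ n (l : List V), l.length ≤ n → 2 ≤ l.length → l.Chain' A →
    l.head? = some j → l.getLast? = some j → (∀ x ∈ l, x ≠ j → x ∉ VI) →
    ∃ c, IsICycle A VI c := by
  intro n
  induction n with
  | zero => intro l hl h2; omega
  | succ n ih =>
    intro l hln h2 hch hhd hlast hnin
    have hne : l ≠ [] := by rintro rfl; simp at h2
    by_cases hnd : l.dropLast.Nodup
    · -- the walk minus its last vertex is already a cycle
      refine ⟨l.dropLast, ⟨?_, hnd, hch.prefix (List.dropLast_prefix l), ?_⟩, ?_⟩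
      · intro h
        have := congrArg List.length h
        rw [List.length_dropLast] at this
        simp at this; omega
      · intro a b ha hb
        have hl' : l.dropLast ++ [l.getLast hne] = l := List.dropLast_append_getLast hne
        have hj' : l.getLast hne = j := by
          have := List.getLast?_eq_getLast hne
          rw [this] at hlast; exact Option.some.inj hlast
        have hch' : (l.dropLast ++ [l.getLast hne]).Chain' A := by rwa [hl']
        have := (List.isChain_append.mp hch').2.2 a ha (l.getLast hne) rfl
        rw [hj'] at this
        have hb' : b = j := by
          have : l.head? = l.dropLast.head? := by
            conv_lhs => rw [← hl']
            rw [List.head?_append_of_ne_nil]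
            intro h; rw [h] at ha; simp at ha
          rw [this, hb] at hhd; exact Option.some.inj hhd
        rwa [hb']
      · -- exactly one inner vertex
        have hjmem : j ∈ l.dropLast := by
          have : l.head? = l.dropLast.head? := by
            conv_lhs => rw [← List.dropLast_append_getLast hne]
            rw [List.head?_append_of_ne_nil]
            intro h
            have := congrArg List.length h
            rw [List.length_dropLast] at this; simp at this; omega
          rw [this] at hhd
          exact List.mem_of_mem_head? (by rw [hhd]; rfl)
        have : l.dropLast.toFinset ∩ VI = {j} := by
          ext x
          simp only [Finset.mem_inter, List.mem_toFinset, Finset.mem_singleton]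
          constructor
          · rintro ⟨hx, hxVI⟩
            by_contra hxj
            exact hnin x (List.dropLast_subset l hx) hxj hxVI
          · rintro rfl; exact ⟨hjmem, hj⟩
        rw [this]; simp
    · -- shorten the walk at a repeated vertex
      obtain ⟨x, a, b, c, hdecomp⟩ := not_nodup_decomp hnd
      have hl' : l = a ++ x :: (b ++ x :: (c ++ [l.getLast hne])) := by
        conv_lhs => rw [← List.dropLast_append_getLast hne, hdecomp]
        simp
      have hjlast : l.getLast hne = j := by
        have := List.getLast?_eq_getLast hne
        rw [this] at hlast; exact Option.some.inj hlast
      set l' : List V := a ++ x :: (c ++ [l.getLast hne]) with hl'def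
      have hchl : (a ++ x :: (b ++ x :: (c ++ [l.getLast hne]))).Chain' A := by rw [← hl']; exact hch
      have hch1 := (List.isChain_split.mp hchl).1
      have hch2 := (List.isChain_split.mp hchl).2
      have hch3 : ((x :: b) ++ x :: (c ++ [l.getLast hne])).Chain' A := by
        exact hch2
      have hch4 := (List.isChain_split.mp hch3).2
      have hchl' : l'.Chain' A := List.isChain_split.mpr ⟨hch1, hch4⟩
      have hsub : ∀ y ∈ l', y ∈ l := by
        intro y hy
        rw [hl']
        simp only [hl'def, List.mem_append, List.mem_cons] at hy ⊢
        tauto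
      have hhd' : l'.head? = some j := by
        rw [← hhd, hl']
        cases a <;> simp [hl'def]
      have hlast' : l'.getLast? = some j := by
        have : l' = (a ++ x :: c) ++ [l.getLast hne] := by simp [hl'def]
        rw [this, List.getLast?_concat, hjlast]
      have hlen2 : 2 ≤ l'.length := by simp [hl'def]; omega
      have hlen : l'.length ≤ n := by
        have h1 : l.length = a.length + b.length + c.length + 3 := by
          rw [hl']; simp; omega
        have h2 : l'.length = a.length + c.length + 2 := by simp [hl'def]; omega
        omega
      exact ih l' hlen hlen2 hchl' hhd' hlast'
        (fun y hy hyj => hnin y (hsub y hy) hyj)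

/-- Core argument: any inner leaf of `Tᵢ` below the shared non-inner vertex `v`
differs from both `i` and `j`. -/
lemma helper7 [DecidableEq V] {A : V → V → Prop} {VI : Finset V} (hIC : IsKIC A VI)
    {i j : V} (hi : i ∈ VI) (hj : j ∈ VI) {Ti Tj : V → V → Prop}
    (hTi : IsICTree A VI i Ti) (hTj : IsICTree A VI j Tj) {v : V} (hv : v ∉ VI)
    (hvTj : Relation.ReflTransGen Tj j v) :
    ∀ w ∈ VI, Relation.ReflTransGen Ti v w → w ≠ i ∧ w ≠ j := by
  intro w hw hreach
  constructor
  · rintro rfl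
    rcases hreach.cases_tail with rfl | ⟨c, _, hc⟩
    · exact hv hw
    · exact hTi.root_no_parent c hc
  · intro hwj
    rw [hwj] at hreach hw
    clear hwj
    -- build a closed walk through j and derive an I-cycle
    have hvj : v ≠ j := fun h => hv (h ▸ hj)
    obtain ⟨l1, hne1, hch1, hhd1, hlast1, hout1, hin1⟩ := walk_of_rtg hvTj
    obtain ⟨l2, hne2, hch2, hhd2, hlast2, hout2, hin2⟩ := walk_of_rtg hreach
    obtain ⟨t, rfl⟩ : ∃ t, l2 = v :: t := by
      cases l2 with
      | nil => exact absurd rfl hne2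
      | cons y t => exact ⟨t, by cases hhd2; rfl⟩
    have htne : t ≠ [] := by
      rintro rfl
      simp at hlast2
      exact hvj hlast2
    set W : List V := l1 ++ t with hW
    have hchW : W.Chain' A := by
      refine List.isChain_append.mpr ⟨hch1.imp hTj.sub, ?_, ?_⟩
      · exact (List.isChain_cons.mp hch2).2.imp hTi.sub
      · intro x hx y hy
        rw [hlast1] at hx; cases hx
        exact hTi.sub _ _ ((List.isChain_cons.mp hch2).1 y hy)
    have hhdW : W.head? = some j := by
      rw [hW, List.head?_append_of_ne_nil _ hne1, hhd1]
    have hlastW : W.getLast? = some j := by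
      rw [hW, List.getLast?_append]
      have ht : t.getLast? = some j := by
        cases t with
        | nil => exact absurd rfl htne
        | cons z s => rw [← hlast2, List.getLast?_cons_cons]
      rw [ht]; rfl
    have hlenW : 2 ≤ W.length := by
      rw [hW, List.length_append]
      have := List.length_pos_iff.mpr hne1
      have := List.length_pos_iff.mpr htne
      omega
    have hninW : ∀ x ∈ W, x ≠ j → x ∉ VI := by
      intro x hx hxj hxVI
      rw [hW, List.mem_append] at hx
      rcases hx with hx | hx
      · rcases hout1 x hx with rfl | ⟨y, hy⟩
        · exact hv hxVI
        · exact hTj.leaf x hxVI hxj y hy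
      · have hx2 : x ∈ v :: t := List.mem_cons_of_mem _ hx
        rcases hout2 x hx2 with rfl | ⟨y, hy⟩
        · exact hxj rfl
        · by_cases hxi : x = i
          · subst hxi
            rcases hin2 x hx2 with rfl | ⟨u, hu⟩
            · exact hv hxVI
            · exact hTi.root_no_parent u hu
          · exact hTi.leaf x hxVI hxi y hy
    obtain ⟨cyc, hcyc⟩ := icycle_of_closed_walk A VI j hj W.length W le_rfl hlenW
      hchW hhdW hlastW hninW
    exact hIC.2 cyc hcyc

/-- If a non-inner vertex `v` lies in both trees `T_i` and `T_j` of a K-IC structure,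
then the leaves below `v` (in either tree) avoid both `i` and `j`. -/
theorem stmt7 {V : Type u} [DecidableEq V] (A : V → V → Prop) (VI : Finset V)
    (hIC : IsKIC A VI) (i j : V) (hi : i ∈ VI) (hj : j ∈ VI) (hij : i ≠ j)
    (Ti Tj : V → V → Prop) (hTi : IsICTree A VI i Ti) (hTj : IsICTree A VI j Tj)
    (v : V) (hv : v ∉ VI)
    (hvTi : Relation.ReflTransGen Ti i v) (hvTj : Relation.ReflTransGen Tj j v) :
    (∀ w ∈ VI, Relation.ReflTransGen Ti v w → w ≠ i ∧ w ≠ j) ∧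
    (∀ w ∈ VI, Relation.ReflTransGen Tj v w → w ≠ i ∧ w ≠ j) := by
  refine ⟨helper7 hIC hi hj hTi hTj hv hvTj, fun w hw hr => ?_⟩
  have h := helper7 hIC hj hi hTj hTi hv hvTi w hw hr
  exact ⟨h.2, h.1⟩
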